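/- Let n ≥ 1, k ≥ 1, and let f : {0,1}^n → {0,1} be a total Boolean function that depends on all n variables (i.e., for every index j ∈ [n] there exists x ∈ {0,1}^n with f(x) ≠ f(x ⊕ e^j)). Let 0 ≤ ε ≤ 1/2. Suppose there exist a unit vector ψ ∈ ℂ^{(n+1)^k} and a positive semidefinite matrix M on ℂ^{(n+1)^k} with M ≤ I such that ⟨ψ| O_x^{⊗k} M O_x^{⊗k} |ψ⟩ ≥ 1−ε for every x with f(x)=0 and ⟨ψ| O_x^{⊗k} M O_x^{⊗k} |ψ⟩ ≤ ε for every x with f(x)=1. Then k ≥ (n/2)·(1 − 2√(ε(1−ε))). -/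

import Mathlib

open Matrix
open scoped ComplexOrder

/-- Extend an `n`-bit string `x` to indices `0,…,n` with `x₀ := 0` (false). -/
noncomputable def extendBit {n : ℕ} (x : Fin n → Bool) : Fin (n + 1) → Bool :=
  Fin.cases false x

/-- The `k`-fold tensor power `O_x^{⊗k}` of the phase oracle of `x`:
the diagonal matrix on `ℂ^{(n+1)^k}` acting as
`O_x^{⊗k}|i₁,…,i_k⟩ = (−1)^{x_{i₁}+⋯+x_{i_k}}|i₁,…,i_k⟩`. -/
noncomputable def oracleK (n k : ℕ) (x : Fin n → Bool) :
    Matrix (Fin k → Fin (n + 1)) (Fin k → Fin (n + 1)) ℂ :=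
  Matrix.diagonal fun i => ∏ m, if extendBit x (i m) then (-1 : ℂ) else 1


lemma dot_cs {ι : Type*} [Fintype ι] (a b : ι → ℂ) :
    ‖star a ⬝ᵥ b‖ ≤ Real.sqrt (∑ i, ‖a i‖ ^ 2) * Real.sqrt (∑ i, ‖b i‖ ^ 2) := by
  have h := norm_inner_le_norm (𝕜 := ℂ) ((WithLp.equiv 2 (ι → ℂ)).symm a)
    ((WithLp.equiv 2 (ι → ℂ)).symm b)
  rw [show inner ℂ ((WithLp.equiv 2 (ι → ℂ)).symm a) ((WithLp.equiv 2 (ι → ℂ)).symm b)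
      = star a ⬝ᵥ b from by rw [dotProduct_comm]; rfl] at h
  have na : ‖(WithLp.equiv 2 (ι → ℂ)).symm a‖ = Real.sqrt (∑ i, ‖a i‖ ^ 2) := by
    simpa using EuclideanSpace.norm_eq ((WithLp.equiv 2 (ι → ℂ)).symm a)
  have nb : ‖(WithLp.equiv 2 (ι → ℂ)).symm b‖ = Real.sqrt (∑ i, ‖b i‖ ^ 2) := by
    simpa using EuclideanSpace.norm_eq ((WithLp.equiv 2 (ι → ℂ)).symm b)
  rwa [na, nb] at h

lemma dot_self {ι : Type*} [Fintype ι] (a : ι → ℂ) :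
    star a ⬝ᵥ a = ((∑ i, ‖a i‖ ^ 2 : ℝ) : ℂ) := by
  simp [dotProduct, Pi.star_apply, RCLike.star_def, RCLike.conj_mul]

lemma overlap_scalar (p q ε : ℝ) (hε0 : 0 ≤ ε) (hε1 : ε ≤ 1/2)
    (hp1 : 1 - ε ≤ p) (hp2 : p ≤ 1) (hq0 : 0 ≤ q) (hq1 : q ≤ ε) :
    Real.sqrt (p * q) + Real.sqrt ((1 - p) * (1 - q)) ≤ 2 * Real.sqrt (ε * (1 - ε)) := by
  have hp0 : 0 ≤ p := by linarith
  have hq2 : q ≤ 1 := by linarith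
  have h1 : p * q + (1 - p) * (1 - q) ≤ 2 * (ε * (1 - ε)) := by nlinarith [(p - (1 - ε)) * (1 - 2*q), (ε - q) * (1 - 2*ε)]
  have h2 : Real.sqrt (p * q) * Real.sqrt ((1 - p) * (1 - q)) ≤ ε * (1 - ε) := by
    have : Real.sqrt (p * q) * Real.sqrt ((1 - p) * (1 - q))
        = Real.sqrt ((p * (1 - p)) * (q * (1 - q))) := by
      rw [← Real.sqrt_mul (mul_nonneg hp0 hq0)]; ring_nf
    rw [this]
    have hpp : p * (1 - p) ≤ ε * (1 - ε) := by nlinarith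
    have hqq : q * (1 - q) ≤ ε * (1 - ε) := by nlinarith
    calc Real.sqrt ((p * (1 - p)) * (q * (1 - q)))
        ≤ Real.sqrt ((ε * (1 - ε)) * (ε * (1 - ε))) := by
          apply Real.sqrt_le_sqrt; nlinarith [mul_nonneg hp0 (by linarith : (0:ℝ) ≤ 1 - p), mul_nonneg hq0 (by linarith : (0:ℝ) ≤ 1 - q)]
      _ = ε * (1 - ε) := Real.sqrt_mul_self (by nlinarith)
  have key : (Real.sqrt (p * q) + Real.sqrt ((1 - p) * (1 - q)))^2 ≤ (2 * Real.sqrt (ε * (1 - ε)))^2 := by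
    have e1 : Real.sqrt (p * q) ^ 2 = p * q := Real.sq_sqrt (mul_nonneg hp0 hq0)
    have e2 : Real.sqrt ((1 - p) * (1 - q)) ^ 2 = (1 - p) * (1 - q) :=
      Real.sq_sqrt (mul_nonneg (by linarith) (by linarith))
    have e3 : Real.sqrt (ε * (1 - ε)) ^ 2 = ε * (1 - ε) := Real.sq_sqrt (by nlinarith)
    nlinarith [h1, h2, e1, e2, e3]
  have hs : 0 ≤ Real.sqrt (p * q) + Real.sqrt ((1 - p) * (1 - q)) := by positivity
  nlinarith [key, hs, Real.sqrt_nonneg (ε * (1 - ε))]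

open scoped MatrixOrder in
lemma psd_exists_sqrt {ι : Type*} [Fintype ι] [DecidableEq ι]
    {M : Matrix ι ι ℂ} (hM : M.PosSemidef) : ∃ B : Matrix ι ι ℂ, M = Bᴴ * B :=
  CStarAlgebra.nonneg_iff_eq_star_mul_self.mp hM.nonneg

noncomputable def psdSqrt {ι : Type*} [Fintype ι] [DecidableEq ι]
    {M : Matrix ι ι ℂ} (hM : M.PosSemidef) : Matrix ι ι ℂ :=
  Classical.choose (psd_exists_sqrt hM)

lemma dot_psd_factor {ι : Type*} [Fintype ι] [DecidableEq ι]
    {M : Matrix ι ι ℂ} (hM : M.PosSemidef) (w z : ι → ℂ) :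
    star w ⬝ᵥ (M *ᵥ z) = star (psdSqrt hM *ᵥ w) ⬝ᵥ (psdSqrt hM *ᵥ z) := by
  rw [star_mulVec, ← dotProduct_mulVec, mulVec_mulVec, psdSqrt,
    ← Classical.choose_spec (psd_exists_sqrt hM)]

lemma dot_psd_cs {ι : Type*} [Fintype ι] [DecidableEq ι]
    {M : Matrix ι ι ℂ} (hM : M.PosSemidef) (u v : ι → ℂ) :
    ‖star u ⬝ᵥ (M *ᵥ v)‖ ≤
      Real.sqrt (star u ⬝ᵥ (M *ᵥ u)).re * Real.sqrt (star v ⬝ᵥ (M *ᵥ v)).re := by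
  rw [dot_psd_factor hM u v, dot_psd_factor hM u u, dot_psd_factor hM v v,
    dot_self, dot_self, Complex.ofReal_re, Complex.ofReal_re]
  exact dot_cs _ _

lemma extendBit_zero {n : ℕ} (x : Fin n → Bool) : extendBit x 0 = false := rfl

lemma extendBit_succ {n : ℕ} (x : Fin n → Bool) (j : Fin n) :
    extendBit x j.succ = x j := by simp [extendBit]

lemma dstar {n k : ℕ} (x : Fin n → Bool) (i : Fin k → Fin (n + 1)) :
    star (∏ m, if extendBit x (i m) then (-1 : ℂ) else 1)
      = ∏ m, if extendBit x (i m) then (-1 : ℂ) else 1 := by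
  rw [star_prod]
  refine Finset.prod_congr rfl fun m _ => ?_
  split <;> simp

lemma dnorm {n k : ℕ} (x : Fin n → Bool) (i : Fin k → Fin (n + 1)) :
    ‖∏ m, if extendBit x (i m) then (-1 : ℂ) else 1‖ = 1 := by
  rw [norm_prod]
  refine Finset.prod_eq_one fun m _ => ?_
  split <;> simp

lemma dmul {n k : ℕ} (x : Fin n → Bool) (j : Fin n) (i : Fin k → Fin (n + 1)) :
    (∏ m, if extendBit x (i m) then (-1 : ℂ) else 1) *
      (∏ m, if extendBit (Function.update x j (!x j)) (i m) then (-1 : ℂ) else 1)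
    = (-1) ^ (Finset.univ.filter (fun m => i m = j.succ)).card := by
  rw [← Finset.prod_mul_distrib]
  have key : ∀ m, (if extendBit x (i m) then (-1 : ℂ) else 1) *
      (if extendBit (Function.update x j (!x j)) (i m) then (-1 : ℂ) else 1)
      = if i m = j.succ then (-1 : ℂ) else 1 := by
    intro m
    rcases Fin.eq_zero_or_eq_succ (i m) with h | ⟨l, h⟩
    · rw [h, extendBit_zero, extendBit_zero, if_neg (Ne.symm (Fin.succ_ne_zero j))]
      simp
    · rw [h, extendBit_succ, extendBit_succ]
      rcases eq_or_ne l j with rfl | hlj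
      · rw [Function.update_self, if_pos rfl]
        cases x l <;> simp
      · rw [Function.update_of_ne hlj,
          if_neg (fun hh => hlj (Fin.succ_injective _ hh))]
        cases x l <;> simp
  rw [Finset.prod_congr rfl (fun m _ => key m), Finset.prod_ite,
    Finset.prod_const, Finset.prod_const, one_pow, mul_one]

lemma overlap_eq {n k : ℕ} (x : Fin n → Bool) (j : Fin n)
    (ψ : (Fin k → Fin (n + 1)) → ℂ) :
    star (oracleK n k x *ᵥ ψ) ⬝ᵥ (oracleK n k (Function.update x j (!x j)) *ᵥ ψ)
    = ((∑ i, (-1 : ℝ) ^ (Finset.univ.filter (fun m => i m = j.succ)).card * ‖ψ i‖ ^ 2 : ℝ) : ℂ) := by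
  push_cast
  rw [dotProduct]
  refine Finset.sum_congr rfl fun i _ => ?_
  rw [Pi.star_apply]
  show star ((oracleK n k x *ᵥ ψ) i) * ((oracleK n k (Function.update x j (!x j)) *ᵥ ψ) i) = _
  rw [show oracleK n k x = Matrix.diagonal fun i => ∏ m, if extendBit x (i m) then (-1:ℂ) else 1 from rfl,
    show oracleK n k (Function.update x j (!x j)) = Matrix.diagonal fun i => ∏ m, if extendBit (Function.update x j (!x j)) (i m) then (-1:ℂ) else 1 from rfl,
    mulVec_diagonal, mulVec_diagonal, star_mul', dstar]
  have h2 : star (ψ i) * ψ i = ((‖ψ i‖ ^ 2 : ℝ) : ℂ) := by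
    rw [RCLike.star_def, RCLike.conj_mul]; norm_cast
  calc (∏ m, if extendBit x (i m) then (-1:ℂ) else 1) * star (ψ i) *
        ((∏ m, if extendBit (Function.update x j (!x j)) (i m) then (-1:ℂ) else 1) * ψ i)
      = ((∏ m, if extendBit x (i m) then (-1:ℂ) else 1) *
          (∏ m, if extendBit (Function.update x j (!x j)) (i m) then (-1:ℂ) else 1)) *
          (star (ψ i) * ψ i) := by ring
    _ = _ := by rw [dmul, h2]; push_cast; ring

lemma pair_bound {ι : Type*} [Fintype ι] [DecidableEq ι] {M : Matrix ι ι ℂ}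
    (hM : M.PosSemidef) (hMI : (1 - M).PosSemidef) (u v : ι → ℂ)
    (hu : star u ⬝ᵥ u = 1) (hv : star v ⬝ᵥ v = 1)
    {ε : ℝ} (hε0 : 0 ≤ ε) (hε1 : ε ≤ 1/2)
    (hp : ((1 - ε : ℝ) : ℂ) ≤ star u ⬝ᵥ (M *ᵥ u))
    (hq : star v ⬝ᵥ (M *ᵥ v) ≤ ((ε : ℝ) : ℂ)) :
    (star u ⬝ᵥ v).re ≤ 2 * Real.sqrt (ε * (1 - ε)) := by
  set p := (star u ⬝ᵥ (M *ᵥ u)).re with hpdef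
  set q := (star v ⬝ᵥ (M *ᵥ v)).re with hqdef
  have hp0 : 0 ≤ p := (Complex.nonneg_iff.mp (hM.dotProduct_mulVec_nonneg u)).1
  have hq0 : 0 ≤ q := (Complex.nonneg_iff.mp (hM.dotProduct_mulVec_nonneg v)).1
  have hsub : ∀ w : ι → ℂ, star w ⬝ᵥ ((1 - M) *ᵥ w) = star w ⬝ᵥ w - star w ⬝ᵥ (M *ᵥ w) := by
    intro w; rw [sub_mulVec, one_mulVec, dotProduct_sub]
  have hp1 : p ≤ 1 := by
    have := (Complex.nonneg_iff.mp (hMI.dotProduct_mulVec_nonneg u)).1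
    rw [hsub u, hu, Complex.sub_re, Complex.one_re] at this
    linarith
  have hq1 : q ≤ 1 := by
    have := (Complex.nonneg_iff.mp (hMI.dotProduct_mulVec_nonneg v)).1
    rw [hsub v, hv, Complex.sub_re, Complex.one_re] at this
    linarith
  have hpε : 1 - ε ≤ p := by
    have := (Complex.le_def.mp hp).1
    simpa using this
  have hqε : q ≤ ε := by
    have := (Complex.le_def.mp hq).1
    simpa using this
  -- decomposition
  have hsplit : star u ⬝ᵥ v = star u ⬝ᵥ (M *ᵥ v) + star u ⬝ᵥ ((1 - M) *ᵥ v) := by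
    rw [sub_mulVec, one_mulVec, dotProduct_sub]; ring
  have h1 : ‖star u ⬝ᵥ (M *ᵥ v)‖ ≤ Real.sqrt p * Real.sqrt q := dot_psd_cs hM u v
  have h2 : ‖star u ⬝ᵥ ((1 - M) *ᵥ v)‖ ≤ Real.sqrt (1 - p) * Real.sqrt (1 - q) := by
    have := dot_psd_cs hMI u v
    rwa [hsub u, hsub v, hu, hv] at this
    -- need re of (1 - z) = 1 - re z; handled below if rwa fails
  have hre : (star u ⬝ᵥ v).re ≤ Real.sqrt (p * q) + Real.sqrt ((1 - p) * (1 - q)) := by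
    rw [hsplit, Complex.add_re]
    have a1 : (star u ⬝ᵥ (M *ᵥ v)).re ≤ Real.sqrt p * Real.sqrt q :=
      le_trans (Complex.re_le_norm _) h1
    have a2 : (star u ⬝ᵥ ((1 - M) *ᵥ v)).re ≤ Real.sqrt (1 - p) * Real.sqrt (1 - q) :=
      le_trans (Complex.re_le_norm _) h2
    rw [Real.sqrt_mul hp0, Real.sqrt_mul (by linarith : (0:ℝ) ≤ 1 - p)]
    linarith
  exact le_trans hre (overlap_scalar p q ε hε0 hε1 hpε hp1 hq0 hqε)

/-- Any nonadaptive quantum query algorithm `(ψ, M)` making `k` queries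
that computes a total boolean function `f` depending on all `n` variables with failure
probability at most `ε ≤ 1/2` satisfies `k ≥ (n/2)(1 − 2√(ε(1−ε)))`. -/
theorem nonadaptive_quantum_computation_lower_bound
    (n k : ℕ) (hn : 1 ≤ n) (hk : 1 ≤ k)
    (f : (Fin n → Bool) → Bool)
    (hdep : ∀ j : Fin n, ∃ x : Fin n → Bool, f x ≠ f (Function.update x j (!x j)))
    (ε : ℝ) (hε0 : 0 ≤ ε) (hε1 : ε ≤ 1 / 2)
    (ψ : (Fin k → Fin (n + 1)) → ℂ) (hψ : ∑ i, ‖ψ i‖ ^ 2 = 1)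
    (M : Matrix (Fin k → Fin (n + 1)) (Fin k → Fin (n + 1)) ℂ)
    (hM : M.PosSemidef) (hMI : (1 - M).PosSemidef)
    (h0 : ∀ x, f x = false →
      ((1 - ε : ℝ) : ℂ) ≤ star ψ ⬝ᵥ ((oracleK n k x * M * oracleK n k x) *ᵥ ψ))
    (h1 : ∀ x, f x = true →
      star ψ ⬝ᵥ ((oracleK n k x * M * oracleK n k x) *ᵥ ψ) ≤ ((ε : ℝ) : ℂ)) :
    (n : ℝ) / 2 * (1 - 2 * Real.sqrt (ε * (1 - ε))) ≤ k := by
  classical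
  set S : Fin n → ℝ := fun j => ∑ i ∈ Finset.univ.filter
      (fun i => Odd ((Finset.univ.filter (fun m => i m = Fin.succ j)).card)),
      ‖ψ i‖ ^ 2 with hSdef
  -- unit norm of rotated vectors
  have hnorm1 : ∀ x : Fin n → Bool,
      star (oracleK n k x *ᵥ ψ) ⬝ᵥ (oracleK n k x *ᵥ ψ) = 1 := by
    intro x
    rw [dot_self]
    have he : ∀ i, ‖(oracleK n k x *ᵥ ψ) i‖ ^ 2 = ‖ψ i‖ ^ 2 := by
      intro i
      rw [show oracleK n k x = Matrix.diagonal fun i =>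
          ∏ m, if extendBit x (i m) then (-1:ℂ) else 1 from rfl,
        mulVec_diagonal, norm_mul, dnorm, one_mul]
    rw [Finset.sum_congr rfl fun i _ => he i, hψ, Complex.ofReal_one]
  -- acceptance probability in terms of rotated vectors
  have hPeq : ∀ x : Fin n → Bool,
      star ψ ⬝ᵥ ((oracleK n k x * M * oracleK n k x) *ᵥ ψ)
        = star (oracleK n k x *ᵥ ψ) ⬝ᵥ (M *ᵥ (oracleK n k x *ᵥ ψ)) := by
    intro x
    have hH : (oracleK n k x)ᴴ = oracleK n k x := by
      rw [show oracleK n k x = Matrix.diagonal fun i =>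
          ∏ m, if extendBit x (i m) then (-1:ℂ) else 1 from rfl,
        diagonal_conjTranspose]
      exact congrArg Matrix.diagonal (funext fun i => dstar x i)
    rw [show (oracleK n k x * M * oracleK n k x) *ᵥ ψ
        = oracleK n k x *ᵥ (M *ᵥ (oracleK n k x *ᵥ ψ)) by
      rw [mulVec_mulVec, mulVec_mulVec]]
    rw [star_mulVec, hH]
    exact dotProduct_mulVec _ _ _
  -- flipping twice gives back the input
  have hupd : ∀ w : Fin n → Bool, ∀ j : Fin n,
      Function.update (Function.update w j (!w j)) j
        (!(Function.update w j (!w j)) j) = w := by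
    intro w j
    rw [Function.update_self, Bool.not_not, Function.update_idem, Function.update_eq_self]
  -- Step 1 : per-coordinate bound
  have hS : ∀ j : Fin n, 1 - 2 * S j ≤ 2 * Real.sqrt (ε * (1 - ε)) := by
    intro j
    obtain ⟨x, hx⟩ := hdep j
    obtain ⟨z, hz0, hz1⟩ : ∃ z : Fin n → Bool,
        f z = false ∧ f (Function.update z j (!z j)) = true := by
      by_cases hfx : f x = false
      · refine ⟨x, hfx, ?_⟩
        revert hx
        cases h' : f (Function.update x j (!x j)) <;> simp [hfx, h']
      · have hfx' : f x = true := by revert hfx; cases f x <;> simp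
        refine ⟨Function.update x j (!x j), ?_, ?_⟩
        · revert hx
          cases h' : f (Function.update x j (!x j)) <;> simp [hfx', h']
        · rw [hupd x j, hfx']
    have hb := pair_bound hM hMI (oracleK n k z *ᵥ ψ)
      (oracleK n k (Function.update z j (!z j)) *ᵥ ψ)
      (hnorm1 z) (hnorm1 _) hε0 hε1
      (by rw [← hPeq]; exact h0 z hz0)
      (by rw [← hPeq]; exact h1 _ hz1)
    rw [overlap_eq z j ψ, Complex.ofReal_re] at hb
    have hsum : ∑ i, (-1:ℝ) ^ ((Finset.univ.filter (fun m => i m = Fin.succ j)).card)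
        * ‖ψ i‖ ^ 2 = 1 - 2 * S j := by
      rw [← Finset.sum_filter_add_sum_filter_not Finset.univ
        (fun i => Odd ((Finset.univ.filter (fun m => i m = Fin.succ j)).card))]
      have e1 : ∑ i ∈ Finset.univ.filter
          (fun i => Odd ((Finset.univ.filter (fun m => i m = Fin.succ j)).card)),
          (-1:ℝ) ^ ((Finset.univ.filter (fun m => i m = Fin.succ j)).card) * ‖ψ i‖ ^ 2
          = - S j := by
        simp only [hSdef]
        rw [← Finset.sum_neg_distrib]
        refine Finset.sum_congr rfl fun i hi => ?_
        rw [(Finset.mem_filter.mp hi).2.neg_one_pow]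
        ring
      have e2 : ∑ i ∈ Finset.univ.filter
          (fun i => ¬ Odd ((Finset.univ.filter (fun m => i m = Fin.succ j)).card)),
          (-1:ℝ) ^ ((Finset.univ.filter (fun m => i m = Fin.succ j)).card) * ‖ψ i‖ ^ 2
          = 1 - S j := by
        have e3 : ∑ i ∈ Finset.univ.filter
            (fun i => ¬ Odd ((Finset.univ.filter (fun m => i m = Fin.succ j)).card)),
            (-1:ℝ) ^ ((Finset.univ.filter (fun m => i m = Fin.succ j)).card) * ‖ψ i‖ ^ 2
            = ∑ i ∈ Finset.univ.filter
            (fun i => ¬ Odd ((Finset.univ.filter (fun m => i m = Fin.succ j)).card)),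
            ‖ψ i‖ ^ 2 := by
          refine Finset.sum_congr rfl fun i hi => ?_
          rw [(Nat.not_odd_iff_even.mp (Finset.mem_filter.mp hi).2).neg_one_pow]
          ring
        have e4 := Finset.sum_filter_add_sum_filter_not Finset.univ
          (fun i => Odd ((Finset.univ.filter (fun m => i m = Fin.succ j)).card))
          (fun i => ‖ψ i‖ ^ 2)
        rw [hψ] at e4
        rw [e3]
        simp only [hSdef]
        linarith
      rw [e1, e2]
      ring
    rw [hsum] at hb
    exact hb
  -- Step 2 : total weight bound
  have hcard : ∀ i : Fin k → Fin (n + 1),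
      (Finset.univ.filter (fun j : Fin n =>
        Odd ((Finset.univ.filter (fun m => i m = Fin.succ j)).card))).card ≤ k := by
    intro i
    have h1' : (Finset.univ.filter (fun j : Fin n =>
        Odd ((Finset.univ.filter (fun m => i m = Fin.succ j)).card))).card
        ≤ (Finset.univ.image i).card := by
      apply Finset.card_le_card_of_injOn Fin.succ
      · intro j hj
        rw [Finset.mem_coe, Finset.mem_filter] at hj
        have hne : (Finset.univ.filter (fun m => i m = Fin.succ j)).Nonempty := by
          apply Finset.card_pos.mp
          rcases hj.2 with ⟨t, ht⟩
          omega
        obtain ⟨m, hm⟩ := hne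
        exact Finset.mem_image.mpr ⟨m, Finset.mem_univ m, (Finset.mem_filter.mp hm).2⟩
      · intro a _ b _ h
        exact Fin.succ_injective _ h
    calc (Finset.univ.filter (fun j : Fin n =>
          Odd ((Finset.univ.filter (fun m => i m = Fin.succ j)).card))).card
        ≤ (Finset.univ.image i).card := h1'
      _ ≤ (Finset.univ : Finset (Fin k)).card := Finset.card_image_le
      _ = k := Finset.card_univ.trans (Fintype.card_fin k)
  have hsumS : ∑ j : Fin n, S j ≤ (k : ℝ) := by
    have heq : ∀ j : Fin n, S j = ∑ i, if Odd ((Finset.univ.filter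
        (fun m => i m = Fin.succ j)).card) then ‖ψ i‖ ^ 2 else 0 := by
      intro j
      simp only [hSdef]
      rw [Finset.sum_filter]
    calc ∑ j : Fin n, S j
        = ∑ j : Fin n, ∑ i, if Odd ((Finset.univ.filter
            (fun m => i m = Fin.succ j)).card) then ‖ψ i‖ ^ 2 else 0 :=
          Finset.sum_congr rfl fun j _ => heq j
      _ = ∑ i, ∑ j : Fin n, if Odd ((Finset.univ.filter
            (fun m => i m = Fin.succ j)).card) then ‖ψ i‖ ^ 2 else 0 :=
          Finset.sum_comm
      _ = ∑ i, ((Finset.univ.filter (fun j : Fin n =>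
            Odd ((Finset.univ.filter (fun m => i m = Fin.succ j)).card))).card : ℝ)
            * ‖ψ i‖ ^ 2 := by
          refine Finset.sum_congr rfl fun i _ => ?_
          rw [← Finset.sum_filter, Finset.sum_const, nsmul_eq_mul]
      _ ≤ ∑ i, (k : ℝ) * ‖ψ i‖ ^ 2 := by
          refine Finset.sum_le_sum fun i _ => ?_
          exact mul_le_mul_of_nonneg_right (by exact_mod_cast hcard i) (by positivity)
      _ = k := by rw [← Finset.mul_sum, hψ, mul_one]
  -- combine
  have hfin : (n : ℝ) * ((1 - 2 * Real.sqrt (ε * (1 - ε))) / 2) ≤ ∑ j : Fin n, S j := by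
    have := Finset.card_nsmul_le_sum Finset.univ S
      ((1 - 2 * Real.sqrt (ε * (1 - ε))) / 2) (fun j _ => by linarith [hS j])
    simpa [Finset.card_univ, nsmul_eq_mul] using this
  calc (n : ℝ) / 2 * (1 - 2 * Real.sqrt (ε * (1 - ε)))
      = (n : ℝ) * ((1 - 2 * Real.sqrt (ε * (1 - ε))) / 2) := by ring
    _ ≤ ∑ j : Fin n, S j := hfin
    _ ≤ k := hsumS
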